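/- Let N ≥ 1 and define softmax(u)_i = exp(u_i)/Σ_{j=1}^N exp(u_j) for u ∈ ℝ^N. Then the softmax map is (1/2)-Lipschitz with respect to the Euclidean norm: for all u, v ∈ ℝ^N, ‖softmax(u) − softmax(v)‖₂ ≤ (1/2)·‖u − v‖₂. -/

import Mathlib

open Finset

/-- `softmax(u)_i = exp(u_i) / Σ_j exp(u_j)`. -/
noncomputable def softmax {N : ℕ} (u : Fin N → ℝ) : Fin N → ℝ :=
  fun i => Real.exp (u i) / ∑ j, Real.exp (u j)


lemma expand_sum {N : ℕ} (s x : Fin N → ℝ) (hs1 : ∑ i, s i = 1) (c : ℝ) :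
    ∑ i, s i * (x i - c)^2 = (∑ i, s i * x i^2) - 2*c*(∑ i, s i * x i) + c^2 := by
  have h : ∀ i : Fin N, s i * (x i - c)^2 = s i * x i^2 - 2*c*(s i * x i) + c^2 * s i := by
    intro i; ring
  simp_rw [h, Finset.sum_add_distrib, Finset.sum_sub_distrib, ← Finset.mul_sum, hs1]
  ring

/-- Variance bound: for a probability vector `s`, `Var_s(x) ≤ ‖x‖²/2`. -/
lemma var_le_half {N : ℕ} (hN : 1 ≤ N) (s x : Fin N → ℝ) (hs0 : ∀ i, 0 ≤ s i)
    (hs1 : ∑ i, s i = 1) :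
    ∑ i, s i * (x i - ∑ j, s j * x j)^2 ≤ (1/2) * ∑ i, x i ^ 2 := by
  have hne : (Finset.univ : Finset (Fin N)).Nonempty := by
    simp [Finset.univ_nonempty_iff, ← Fin.pos_iff_nonempty]; omega
  set m := ∑ j, s j * x j with hm
  set M := Finset.univ.sup' hne x with hM
  set μ := Finset.univ.inf' hne x with hμ
  set c := (M + μ)/2 with hc
  obtain ⟨a, -, ha⟩ := Finset.exists_mem_eq_sup' hne x
  obtain ⟨b, -, hb⟩ := Finset.exists_mem_eq_inf' hne x
  have hxM : ∀ i, x i ≤ M := fun i => Finset.le_sup' x (Finset.mem_univ i)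
  have hxμ : ∀ i, μ ≤ x i := fun i => Finset.inf'_le x (Finset.mem_univ i)
  -- step A: recentering
  have stepA : ∑ i, s i * (x i - m)^2 ≤ ∑ i, s i * (x i - c)^2 := by
    rw [expand_sum s x hs1 m, expand_sum s x hs1 c, ← hm]
    nlinarith [sq_nonneg (m - c)]
  -- step B: pointwise bound
  have R2 : ∀ i, (x i - c)^2 ≤ ((M - μ)/2)^2 := by
    intro i
    have h1 := hxM i; have h2 := hxμ i
    rw [hc]; nlinarith
  have stepB : ∑ i, s i * (x i - c)^2 ≤ ((M - μ)/2)^2 := by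
    calc ∑ i, s i * (x i - c)^2 ≤ ∑ i, s i * ((M - μ)/2)^2 := by
          apply Finset.sum_le_sum; intro i _
          exact mul_le_mul_of_nonneg_left (R2 i) (hs0 i)
      _ = ((M - μ)/2)^2 := by rw [← Finset.sum_mul, hs1, one_mul]
  -- step C
  have hMa : M = x a := ha
  have hμb : μ = x b := hb
  have stepC : ((M - μ)/2)^2 ≤ (1/2) * ∑ i, x i ^ 2 := by
    by_cases hab : a = b
    · have hMμ : M = μ := by rw [hMa, hμb, hab]
      have : ((M - μ)/2)^2 = 0 := by rw [hMμ]; ring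
      rw [this]
      have : (0:ℝ) ≤ ∑ i, x i ^ 2 := Finset.sum_nonneg (fun i _ => sq_nonneg (x i))
      linarith
    · have hsum : x a ^ 2 + x b ^ 2 ≤ ∑ i, x i ^ 2 := by
        have h1 := Finset.add_sum_erase (Finset.univ) (fun i => x i ^ 2) (Finset.mem_univ a)
        have hbmem : b ∈ Finset.univ.erase a := Finset.mem_erase.mpr ⟨Ne.symm hab, Finset.mem_univ b⟩
        have h2 := Finset.single_le_sum (f := fun i => x i ^ 2) (fun i _ => sq_nonneg (x i)) hbmem
        linarith
      rw [hMa, hμb]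
      nlinarith [sq_nonneg (x a + x b), hsum]
  linarith

lemma quarter {N : ℕ} (hN : 1 ≤ N) (s x : Fin N → ℝ) (hs0 : ∀ i, 0 ≤ s i)
    (hs1 : ∑ i, s i = 1) :
    ∑ i, (s i * (x i - ∑ j, s j * x j))^2 ≤ (1/4) * ∑ i, x i ^ 2 := by
  set m := ∑ j, s j * x j with hm
  set y : Fin N → ℝ := fun i => s i * (x i - m) with hy
  set my := ∑ j, s j * y j with hmy
  have hvarx := var_le_half hN s x hs0 hs1
  have hvary := var_le_half hN s y hs0 hs1
  have id1 : ∑ i, s i * ((y i - my)*(x i - m)) = ∑ i, y i ^ 2 := by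
    have h1 : ∀ i : Fin N, s i * ((y i - my)*(x i - m))
        = s i * y i * x i - m * (s i * y i) - my * (s i * x i) + (my * m) * s i :=
      fun i => by ring
    have h2 : ∀ i : Fin N, y i ^ 2 = s i * y i * x i - m * (s i * y i) := by
      intro i; simp only [hy]; ring
    simp_rw [h1, h2, Finset.sum_add_distrib, Finset.sum_sub_distrib, ← Finset.mul_sum]
    have e : ∀ i : Fin N, s i * y i = s i * y i := fun _ => rfl
    rw [show ∑ i, s i * y i = my from hmy.symm, show ∑ i, s i * x i = m from hm.symm, hs1]
    ring
  have CS := Finset.sum_mul_sq_le_sq_mul_sq Finset.univ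
    (fun i => Real.sqrt (s i) * (y i - my)) (fun i => Real.sqrt (s i) * (x i - m))
  have e1 : ∀ i : Fin N, (Real.sqrt (s i) * (y i - my)) * (Real.sqrt (s i) * (x i - m))
      = s i * ((y i - my)*(x i - m)) := by
    intro i
    rw [show (Real.sqrt (s i) * (y i - my)) * (Real.sqrt (s i) * (x i - m))
        = (Real.sqrt (s i) * Real.sqrt (s i)) * ((y i - my)*(x i - m)) by ring,
      Real.mul_self_sqrt (hs0 i)]
  have e2 : ∀ i : Fin N, (Real.sqrt (s i) * (y i - my))^2 = s i * (y i - my)^2 := by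
    intro i; rw [mul_pow, Real.sq_sqrt (hs0 i)]
  have e3 : ∀ i : Fin N, (Real.sqrt (s i) * (x i - m))^2 = s i * (x i - m)^2 := by
    intro i; rw [mul_pow, Real.sq_sqrt (hs0 i)]
  simp_rw [e1, e2, e3, id1] at CS
  -- CS : (∑ y²)² ≤ (∑ s (y−my)²)(∑ s (x−m)²)
  have hT0 : (0:ℝ) ≤ ∑ i, y i ^ 2 := Finset.sum_nonneg fun i _ => sq_nonneg _
  have hX0 : (0:ℝ) ≤ ∑ i, x i ^ 2 := Finset.sum_nonneg fun i _ => sq_nonneg _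
  have hvy0 : (0:ℝ) ≤ ∑ i, s i * (y i - my)^2 :=
    Finset.sum_nonneg fun i _ => mul_nonneg (hs0 i) (sq_nonneg _)
  have hvx0 : (0:ℝ) ≤ ∑ i, s i * (x i - m)^2 :=
    Finset.sum_nonneg fun i _ => mul_nonneg (hs0 i) (sq_nonneg _)
  nlinarith [CS, hvary, hvarx, hT0, hX0, hvy0, hvx0]

noncomputable def jmap {N : ℕ} (s : Fin N → ℝ) : (Fin N → ℝ) →L[ℝ] (Fin N → ℝ) :=
  LinearMap.toContinuousLinearMap
  { toFun := fun x i => s i * (x i - ∑ j, s j * x j)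
    map_add' := by
      intro x y; funext i
      have h : ∑ j, s j * (x j + y j) = (∑ j, s j * x j) + ∑ j, s j * y j := by
        rw [← Finset.sum_add_distrib]; exact Finset.sum_congr rfl fun j _ => by ring
      simp only [Pi.add_apply, h]
      ring
    map_smul' := by
      intro c x; funext i
      have h : ∑ j, s j * (c * x j) = c * ∑ j, s j * x j := by
        rw [Finset.mul_sum]; exact Finset.sum_congr rfl fun j _ => by ring
      simp only [Pi.smul_apply, smul_eq_mul, RingHom.id_apply, h]
      ring }

lemma jmap_apply {N : ℕ} (s : Fin N → ℝ) (x : Fin N → ℝ) (i : Fin N) :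
    jmap s x i = s i * (x i - ∑ j, s j * x j) := rfl

section calc1
variable {N : ℕ}

lemma sum_exp_pos (hN : 1 ≤ N) (u : Fin N → ℝ) : 0 < ∑ j, Real.exp (u j) := by
  have hne : (Finset.univ : Finset (Fin N)).Nonempty := by
    simp [Finset.univ_nonempty_iff, ← Fin.pos_iff_nonempty]; omega
  exact Finset.sum_pos (fun j _ => Real.exp_pos _) hne

lemma softmax_nonneg (hN : 1 ≤ N) (u : Fin N → ℝ) (i : Fin N) : 0 ≤ softmax u i :=
  div_nonneg (Real.exp_pos _).le (sum_exp_pos hN u).le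

lemma softmax_sum_one (hN : 1 ≤ N) (u : Fin N → ℝ) : ∑ i, softmax u i = 1 := by
  unfold softmax
  rw [← Finset.sum_div, div_self (sum_exp_pos hN u).ne']

lemma softmax_hasFDerivAt (hN : 1 ≤ N) (u : Fin N → ℝ) :
    HasFDerivAt softmax (jmap (softmax u)) u := by
  refine hasFDerivAt_pi'.mpr fun i => ?_
  have hS : (0:ℝ) < ∑ j, Real.exp (u j) := sum_exp_pos hN u
  have hnum : HasFDerivAt (fun v : Fin N → ℝ => Real.exp (v i))
      (Real.exp (u i) • (ContinuousLinearMap.proj i : (Fin N → ℝ) →L[ℝ] ℝ)) u := by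
    exact HasDerivAt.comp_hasFDerivAt u (Real.hasDerivAt_exp (u i)) (hasFDerivAt_apply (𝕜 := ℝ) i u)
  have hden : HasFDerivAt (fun v : Fin N → ℝ => ∑ j, Real.exp (v j))
      (∑ j, Real.exp (u j) • (ContinuousLinearMap.proj j : (Fin N → ℝ) →L[ℝ] ℝ)) u := by
    exact HasFDerivAt.fun_sum fun j _ =>
      by exact HasDerivAt.comp_hasFDerivAt u (Real.hasDerivAt_exp (u j)) (hasFDerivAt_apply (𝕜 := ℝ) j u)
  have hinv : HasFDerivAt (fun v : Fin N → ℝ => (∑ j, Real.exp (v j))⁻¹)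
      ((-((∑ j, Real.exp (u j))^2)⁻¹) • (∑ j, Real.exp (u j) • (ContinuousLinearMap.proj j : (Fin N → ℝ) →L[ℝ] ℝ))) u := by
    exact HasDerivAt.comp_hasFDerivAt u (hasDerivAt_inv hS.ne') hden
  have hdiv := hnum.fun_mul hinv
  have hfun : (fun v : Fin N → ℝ => softmax v i)
      = fun v : Fin N → ℝ => Real.exp (v i) * (∑ j, Real.exp (v j))⁻¹ := by
    funext v; simp [softmax, div_eq_mul_inv]
  rw [hfun]
  refine hdiv.congr_fderiv (Eq.symm ?_)
  apply ContinuousLinearMap.ext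
  intro x
  simp only [ContinuousLinearMap.coe_comp', Function.comp_apply,
    ContinuousLinearMap.proj_apply, ContinuousLinearMap.smul_apply,
    ContinuousLinearMap.sub_apply, ContinuousLinearMap.coe_sum',
    Finset.sum_apply, smul_eq_mul, ContinuousLinearMap.add_apply, ContinuousLinearMap.sum_apply]
  have hsum : ∑ j, softmax u j * x j = (∑ j, Real.exp (u j) * x j) / (∑ j, Real.exp (u j)) := by
    rw [Finset.sum_div]; exact Finset.sum_congr rfl fun j _ => by unfold softmax; ring
  rw [jmap_apply, hsum]
  unfold softmax
  field_simp
  ring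
end calc1

noncomputable def jE {N : ℕ} (s : Fin N → ℝ) :
    EuclideanSpace ℝ (Fin N) →L[ℝ] EuclideanSpace ℝ (Fin N) :=
  ((PiLp.continuousLinearEquiv 2 ℝ (fun _ : Fin N => ℝ)).symm.toContinuousLinearMap).comp
    ((jmap s).comp (PiLp.continuousLinearEquiv 2 ℝ (fun _ : Fin N => ℝ)).toContinuousLinearMap)

lemma jE_apply {N : ℕ} (s : Fin N → ℝ) (x : EuclideanSpace ℝ (Fin N)) (i : Fin N) :
    jE s x i = s i * (x i - ∑ j, s j * x j) := jmap_apply s x i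

lemma jE_norm_le {N : ℕ} (hN : 1 ≤ N) (s : Fin N → ℝ) (hs0 : ∀ i, 0 ≤ s i)
    (hs1 : ∑ i, s i = 1) : ‖jE s‖ ≤ 1/2 := by
  apply ContinuousLinearMap.opNorm_le_bound _ (by norm_num)
  intro x
  rw [EuclideanSpace.norm_eq, EuclideanSpace.norm_eq]
  have h1 : ∀ i : Fin N, ‖jE s x i‖ ^ 2 = (s i * (x i - ∑ j, s j * x j))^2 := by
    intro i; rw [Real.norm_eq_abs, sq_abs, jE_apply]
  have h2 : ∀ i : Fin N, ‖x i‖ ^ 2 = x i ^ 2 := fun i => by rw [Real.norm_eq_abs, sq_abs]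
  simp_rw [h1, h2]
  have := quarter hN s x hs0 hs1
  calc Real.sqrt (∑ i, (s i * (x i - ∑ j, s j * x j))^2)
      ≤ Real.sqrt ((1/4) * ∑ i, x i ^ 2) := Real.sqrt_le_sqrt this
    _ = 1/2 * Real.sqrt (∑ i, x i ^ 2) := by
        rw [show (1/4 : ℝ) * ∑ i, x i ^ 2 = (1/2)^2 * ∑ i, x i ^ 2 by ring,
          Real.sqrt_mul (sq_nonneg _), Real.sqrt_sq (by norm_num : (0:ℝ) ≤ 1/2)]

lemma softmaxE_hasFDerivAt {N : ℕ} (hN : 1 ≤ N) (u : EuclideanSpace ℝ (Fin N)) :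
    HasFDerivAt (𝕜 := ℝ) (E := EuclideanSpace ℝ (Fin N)) (F := EuclideanSpace ℝ (Fin N))
      (fun w => WithLp.toLp 2 (softmax w)) (jE (softmax u)) u := by
  have e := PiLp.continuousLinearEquiv 2 ℝ (fun _ : Fin N => ℝ)
  have h := softmax_hasFDerivAt hN u
  have h1 := h.comp u
    (PiLp.continuousLinearEquiv 2 ℝ (fun _ : Fin N => ℝ)).toContinuousLinearMap.hasFDerivAt
  have h2 := (PiLp.continuousLinearEquiv 2 ℝ (fun _ : Fin N => ℝ)).symm.toContinuousLinearMap
    |>.hasFDerivAt.comp u h1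
  exact h2

theorem stmt_9 (N : ℕ) (hN : 1 ≤ N) (u v : Fin N → ℝ) :
    Real.sqrt (∑ i, (softmax u i - softmax v i) ^ 2) ≤
      (1 / 2) * Real.sqrt (∑ i, (u i - v i) ^ 2) := by
  let F : EuclideanSpace ℝ (Fin N) → EuclideanSpace ℝ (Fin N) := fun w => WithLp.toLp 2 (softmax w)
  let uE : EuclideanSpace ℝ (Fin N) := WithLp.toLp 2 u
  let vE : EuclideanSpace ℝ (Fin N) := WithLp.toLp 2 v
  have key := Convex.norm_image_sub_le_of_norm_hasFDerivWithin_le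
    (f := F) (f' := fun w => jE (softmax w)) (C := 1/2) (s := Set.univ)
    (fun w _ => (softmaxE_hasFDerivAt hN w).hasFDerivWithinAt)
    (fun w _ => jE_norm_le hN (softmax w) (softmax_nonneg hN w) (softmax_sum_one hN w))
    convex_univ (Set.mem_univ vE) (Set.mem_univ uE)
  have hL : ‖F uE - F vE‖ = Real.sqrt (∑ i, (softmax u i - softmax v i) ^ 2) := by
    rw [EuclideanSpace.norm_eq]
    congr 1
    apply Finset.sum_congr rfl
    intro i _
    rw [Real.norm_eq_abs, sq_abs]
    rfl
  have hR : ‖uE - vE‖ = Real.sqrt (∑ i, (u i - v i) ^ 2) := by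
    rw [EuclideanSpace.norm_eq]
    congr 1
    apply Finset.sum_congr rfl
    intro i _
    rw [Real.norm_eq_abs, sq_abs]
    rfl
  rw [← hL, ← hR]
  exact key
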